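/- Recursive coalgebras are closed under colimits created by the forgetful functor: if D : D → F-Coalg is a diagram in which every coalgebra Dd is recursive and the colimit (C, c) of D is created from a colimit of V ∘ D in C, then (C, c) is recursive. -/

import Mathlib

open CategoryTheory CategoryTheory.Limits

/-- An `F`-coalgebra is recursive if into every `F`-algebra there is a unique
coalgebra-to-algebra morphism. -/
def IsRecursive {𝒞 : Type*} [Category 𝒞] {F : 𝒞 ⥤ 𝒞}
    (R : Endofunctor.Coalgebra F) : Prop :=
  ∀ (A : 𝒞) (a : F.obj A ⟶ A), ∃! h : R.V ⟶ A, h = R.str ≫ F.map h ≫ a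

/-- Recursive coalgebras are closed under colimits created by the forgetful functor:
if every coalgebra in the diagram `D` is recursive and the cocone `cc` over `D` is
mapped by the forgetful functor to a colimit in `𝒞` (i.e. the colimit of `D` is
created from a colimit of `V ∘ D`), then the colimit coalgebra `cc.pt` is recursive. -/
theorem recursive_closed_under_created_colimits {𝒞 : Type*} [Category 𝒞] (F : 𝒞 ⥤ 𝒞)
    {J : Type*} [Category J] (D : J ⥤ Endofunctor.Coalgebra F)
    (cc : Cocone D)
    (hcreated : IsColimit ((Endofunctor.Coalgebra.forget F).mapCocone cc))
    (hrec : ∀ j : J, IsRecursive (D.obj j)) :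
    IsRecursive cc.pt := by
  intro A a
  -- the unique coalgebra-to-algebra morphism from each `D.obj j`
  set h : ∀ j, (D.obj j).V ⟶ A := fun j => (hrec j A a).choose with hh
  have hspec : ∀ j, h j = (D.obj j).str ≫ F.map (h j) ≫ a :=
    fun j => (hrec j A a).choose_spec.1
  have huniq : ∀ j (g : (D.obj j).V ⟶ A),
      g = (D.obj j).str ≫ F.map g ≫ a → g = h j :=
    fun j g hg => (hrec j A a).choose_spec.2 g hg
  -- build a cocone on `V ∘ D` with point `A`
  have hnat : ∀ {j j' : J} (f : j ⟶ j'), (D.map f).f ≫ h j' = h j := by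
    intro j j' f
    apply huniq
    rw [F.map_comp, Category.assoc, Endofunctor.Coalgebra.Hom.h_assoc, ← hspec j']
  have snat : ∀ ⦃j j' : J⦄ (f : j ⟶ j'),
      (D ⋙ Endofunctor.Coalgebra.forget F).map f ≫ h j'
        = h j ≫ ((Functor.const J).obj A).map f := by
    intro j j' f
    simp only [Functor.comp_map, Endofunctor.Coalgebra.forget_map,
      Functor.const_obj_map, Category.comp_id]
    exact hnat f
  let s : Cocone (D ⋙ Endofunctor.Coalgebra.forget F) :=
    { pt := A
      ι := { app := h, naturality := snat } }
  refine ⟨hcreated.desc s, ?_, ?_⟩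
  · -- it is a coalgebra-to-algebra morphism: check on injections
    apply hcreated.hom_ext
    intro j
    have hfac : (cc.ι.app j).f ≫ hcreated.desc s = h j := hcreated.fac s j
    have hι : (D.obj j).str ≫ F.map (cc.ι.app j).f = (cc.ι.app j).f ≫ cc.pt.str :=
      (cc.ι.app j).h
    show (cc.ι.app j).f ≫ hcreated.desc s
        = (cc.ι.app j).f ≫ cc.pt.str ≫ F.map (hcreated.desc s) ≫ a
    rw [hfac, ← Category.assoc, ← hι, Category.assoc]
    erw [← F.map_comp_assoc, hfac, ← hspec j]
  · -- uniqueness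
    intro g hg
    apply hcreated.hom_ext
    intro j
    have hfac : (cc.ι.app j).f ≫ hcreated.desc s = h j := hcreated.fac s j
    show (cc.ι.app j).f ≫ g = (cc.ι.app j).f ≫ hcreated.desc s
    rw [hfac]
    apply huniq
    conv_lhs => rw [hg]
    have hι : (D.obj j).str ≫ F.map (cc.ι.app j).f = (cc.ι.app j).f ≫ cc.pt.str :=
      (cc.ι.app j).h
    show (cc.ι.app j).f ≫ cc.pt.str ≫ F.map g ≫ a = _
    rw [← Category.assoc, ← hι, Category.assoc, ← F.map_comp_assoc]
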